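/- arXiv:1601.01233 — 5 statements merged into one kernel-verified Lean document; each statement's English description precedes it below -/
import Mathlib

section
/- There exists a family of λ-terms {s_n} such that |s_n| = O(n), s_n β-reduces to normal form in n steps, and the normal form of s_n has size at least 2^n (size-explosion: linear-size terms with linear-length reductions but exponential-size normal forms). -/
/-- Pure λ-terms. -/
inductive Term : Type
  | var : ℕ → Term
  | lam : ℕ → Term → Term
  | app : Term → Term → Term
  deriving DecidableEq

/-- Size of a λ-term, counting all constructors. -/
def Term.size : Term → ℕ
  | var _ => 1
  | lam _ t => 1 + size t
  | app t u => 1 + size t + size u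

/-- Meta-level substitution (assuming Barendregt's convention). -/
def Term.subst (x : ℕ) (u : Term) : Term → Term
  | var y => if y = x then u else var y
  | lam y t => if y = x then lam y t else lam y (subst x u t)
  | app t r => app (subst x u t) (subst x u r)

/-- β-reduction, closed under all contexts. -/
inductive Beta : Term → Term → Prop
  | beta (x : ℕ) (t u : Term) : Beta (.app (.lam x t) u) (t.subst x u)
  | lam (x : ℕ) {t t' : Term} : Beta t t' → Beta (.lam x t) (.lam x t')
  | appL {t t' : Term} (u : Term) : Beta t t' → Beta (.app t u) (.app t' u)
  | appR (t : Term) {u u' : Term} : Beta u u' → Beta (.app t u) (.app t u')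

/-- `RelPow r n a b`: `a` reduces to `b` in exactly `n` `r`-steps. -/
inductive RelPow {α : Type} (r : α → α → Prop) : ℕ → α → α → Prop
  | zero (a : α) : RelPow r 0 a a
  | succ {a b c : α} {n : ℕ} : r a b → RelPow r n b c → RelPow r (n + 1) a c

/-- `t` is a β-normal form. -/
def BetaNormal (t : Term) : Prop := ∀ u, ¬ Beta t u

/-- Complete binary application tree of `var 0` of depth `k`. -/
def E : ℕ → Term
  | 0 => .var 0
  | k+1 => .app (E k) (E k)

/-- The duplicating context. -/
def C (t : Term) : Term := .app (.lam 1 t) (.app (.var 1) (.var 1))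

/-- The witness family. -/
def S : ℕ → Term
  | 0 => .var 0
  | n+1 => C (S n)

lemma E_not_lam (k : ℕ) : ∀ x t, E k ≠ .lam x t := by
  cases k <;> simp [E]

lemma app_normal {t u : Term} (h1 : ∀ x b, t ≠ .lam x b)
    (h2 : BetaNormal t) (h3 : BetaNormal u) : BetaNormal (.app t u) := by
  intro v hv
  cases hv with
  | beta x b u' => exact h1 x b rfl
  | appL _ h => exact h2 _ h
  | appR _ h => exact h3 _ h

lemma E_normal (k : ℕ) : BetaNormal (E k) := by
  induction k with
  | zero => intro u h; cases h
  | succ k ih => exact app_normal (E_not_lam k) ih ih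

lemma E_size (k : ℕ) : 2 ^ k ≤ (E k).size := by
  induction k with
  | zero => simp [E, Term.size]
  | succ k ih => simp [E, Term.size, pow_succ]; omega

lemma Beta_C {a b : Term} (h : Beta a b) : Beta (C a) (C b) :=
  Beta.appL _ (Beta.lam 1 h)

lemma RelPow_C {n : ℕ} {a b : Term} (h : RelPow Beta n a b) :
    RelPow Beta n (C a) (C b) := by
  induction h with
  | zero => exact RelPow.zero _
  | succ h1 _ ih => exact RelPow.succ (Beta_C h1) ih

lemma RelPow_snoc {α : Type} {r : α → α → Prop} {n : ℕ} {a b c : α}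
    (h : RelPow r n a b) (h' : r b c) : RelPow r (n+1) a c := by
  induction h with
  | zero => exact RelPow.succ h' (RelPow.zero _)
  | succ h1 _ ih => exact RelPow.succ h1 (ih h')

lemma C_step (k : ℕ) : Beta (C (E k)) (E (k+1)) := by
  have := Beta.beta 1 (E k) (.app (.var 1) (.var 1))
  simpa [C, Term.subst, E] using this

lemma S_red (n : ℕ) : RelPow Beta n (S n) (E n) := by
  induction n with
  | zero => exact RelPow.zero _
  | succ n ih => exact RelPow_snoc (RelPow_C ih) (C_step n)

lemma S_size (n : ℕ) : (S n).size = 5 * n + 1 := by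
  induction n with
  | zero => simp [S, Term.size]
  | succ n ih => simp [S, C, Term.size, ih]; ring

/-- Size-explosion: there is a family of λ-terms of size O(n) each reducing to β-normal
    form in n steps, whose normal form has size at least 2^n. -/
theorem size_explosion_family :
    ∃ (s : ℕ → Term) (k : ℕ), ∀ n : ℕ,
      (s n).size ≤ k * (n + 1) ∧
      ∃ u : Term, RelPow Beta n (s n) u ∧ BetaNormal u ∧ 2 ^ n ≤ u.size := by
  refine ⟨S, 6, fun n => ⟨by simp [S_size]; omega, E n, S_red n, E_normal n, E_size n⟩⟩
end

section
/- In a high-level implementation system (⤳, ⤳_X), if t is a λ-term that is ⤳_X-normalizable, then t is ⤳-normalizable; conversely, if ⤳_X-reduction is strongly normalizing on ls-steps (local boundedness) and t is ⤳-normalizable, then t is ⤳_X-normalizable. -/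
/-- Abstract high-level implementation system: ⤳ (`lead`) is a deterministic strategy on
λ-terms (the `pure` terms), ⤳_X is a partial strategy on terms with explicit substitutions
whose steps are partitioned into dB-steps (`dB`) and ls-steps (`ls`); `unf` is the unfolding,
which is the identity on pure terms. Hypotheses: normal form property (`hnf`), projection
property (`hls`, `hdb`).

Conclusion: (1) if `t` is ⤳_X-normalizable then it is ⤳-normalizable; (2) conversely, if
ls-reduction is strongly normalizing (local boundedness) and `t` is ⤳-normalizable, then
`t` is ⤳_X-normalizable. -/
theorem high_level_normalization {T : Type} (pure : T → Prop) (unf : T → T)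
    (lead dB ls : T → T → Prop)
    (hdet : ∀ a b c, lead a b → lead a c → b = c)
    (hpure : ∀ a, pure a → unf a = a)
    (hnf : ∀ a, (∀ b, ¬ dB a b) → (∀ b, ¬ ls a b) → ∀ c, ¬ lead (unf a) c)
    (hls : ∀ a b, ls a b → unf a = unf b)
    (hdb : ∀ a b, dB a b → lead (unf a) (unf b))
    (t : T) (ht : pure t) :
    ((∃ u, Relation.ReflTransGen (fun a b => dB a b ∨ ls a b) t u ∧
        (∀ r, ¬ dB u r) ∧ (∀ r, ¬ ls u r)) →
      ∃ s, Relation.ReflTransGen lead t s ∧ ∀ r, ¬ lead s r)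
    ∧
    (WellFounded (fun a b => ls b a) →
      (∃ s, Relation.ReflTransGen lead t s ∧ ∀ r, ¬ lead s r) →
      ∃ u, Relation.ReflTransGen (fun a b => dB a b ∨ ls a b) t u ∧
        (∀ r, ¬ dB u r) ∧ (∀ r, ¬ ls u r)) := by
  constructor
  · rintro ⟨u, hu, hdBu, hlsu⟩
    refine ⟨unf u, ?_, hnf u hdBu hlsu⟩
    clear hdBu hlsu
    have h : Relation.ReflTransGen lead (unf t) (unf u) := by
      induction hu with
      | refl => exact .refl
      | tail _ step ih =>
        rcases step with h1 | h1
        · exact ih.tail (hdb _ _ h1)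
        · rwa [hls _ _ h1] at ih
    rwa [hpure t ht] at h
  · rintro hwf ⟨s, hts, hs⟩
    have key : ∀ x, Relation.ReflTransGen lead x s → ∀ a, unf a = x →
        ∃ u, Relation.ReflTransGen (fun a b => dB a b ∨ ls a b) a u ∧
          (∀ r, ¬ dB u r) ∧ (∀ r, ¬ ls u r) := by
      intro x hx
      induction hx using Relation.ReflTransGen.head_induction_on with
      | refl =>
        intro a ha
        induction a using hwf.induction with
        | _ a ih =>
          by_cases hlsa : ∃ b, ls a b
          · obtain ⟨b, hb⟩ := hlsa
            obtain ⟨u, h1, h2⟩ := ih b hb (by rw [← hls a b hb]; exact ha)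
            exact ⟨u, .head (Or.inr hb) h1, h2⟩
          · push_neg at hlsa
            by_cases hdBa : ∃ b, dB a b
            · obtain ⟨b, hb⟩ := hdBa
              exact absurd (hdb a b hb) (ha ▸ hs _)
            · push_neg at hdBa
              exact ⟨a, .refl, hdBa, hlsa⟩
      | head hstep htail ih =>
        intro a ha
        induction a using hwf.induction with
        | _ a ih2 =>
          by_cases hlsa : ∃ b, ls a b
          · obtain ⟨b, hb⟩ := hlsa
            obtain ⟨u, h1, h2⟩ := ih2 b hb (by rw [← hls a b hb]; exact ha)
            exact ⟨u, .head (Or.inr hb) h1, h2⟩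
          · push_neg at hlsa
            by_cases hdBa : ∃ b, dB a b
            · obtain ⟨b, hb⟩ := hdBa
              have h3 := hdb a b hb
              rw [ha] at h3
              obtain ⟨u, h1, h2⟩ := ih b (hdet _ _ _ h3 hstep)
              exact ⟨u, .head (Or.inl hb) h1, h2⟩
            · push_neg at hdBa
              exact ⟨a, .refl, hdBa, hlsa⟩
    exact key t hts t (hpure t ht)
end

section
/- In a locally bounded high-level implementation system, every ⤳_X-derivation ρ from a λ-term is at most quadratically longer than its unfolding: |ρ| = O(|ρ↓|²), where |ρ↓| equals the number of dB-steps of ρ. -/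
/-- A ⤳_X-derivation from `a` to `b` with `d` dB-steps and `l` ls-steps. -/
inductive Deriv {T : Type} (dB ls : T → T → Prop) : T → T → ℕ → ℕ → Prop
  | refl (a : T) : Deriv dB ls a a 0 0
  | db {a b c : T} {d l : ℕ} : dB a b → Deriv dB ls b c d l → Deriv dB ls a c (d + 1) l
  | ls {a b c : T} {d l : ℕ} : ls a b → Deriv dB ls b c d l → Deriv dB ls a c d (l + 1)

lemma RelPow.snoc {α : Type} {r : α → α → Prop} {n : ℕ} {a b c : α}
    (h : RelPow r n a b) (hr : r b c) : RelPow r (n + 1) a c := by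
  induction h with
  | zero => exact RelPow.succ hr (RelPow.zero _)
  | succ h1 _ ih => exact RelPow.succ h1 (ih hr)

lemma Deriv.snoc_ls {T : Type} {dB ls : T → T → Prop} {t m b : T} {d l : ℕ}
    (h : Deriv dB ls t m d l) (hb : ls m b) : Deriv dB ls t b d (l + 1) := by
  induction h with
  | refl a => exact Deriv.ls hb (Deriv.refl _)
  | db h1 _ ih => exact Deriv.db h1 (ih hb)
  | ls h1 _ ih => exact Deriv.ls h1 (ih hb)

lemma Deriv.snoc_db {T : Type} {dB ls : T → T → Prop} {t m b : T} {d l : ℕ}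
    (h : Deriv dB ls t m d l) (hb : dB m b) : Deriv dB ls t b (d + 1) l := by
  induction h with
  | refl a => exact Deriv.db hb (Deriv.refl _)
  | db h1 _ ih => exact Deriv.db h1 (ih hb)
  | ls h1 _ ih => exact Deriv.ls h1 (ih hb)

lemma Deriv.append_relpow {T : Type} {dB ls : T → T → Prop} {t m m' : T} {d l j : ℕ}
    (h : Deriv dB ls t m d l) (hr : RelPow ls j m m') : Deriv dB ls t m' d (l + j) := by
  induction hr generalizing l with
  | zero a => exact h
  | succ h1 _ ih =>
    have := ih (h.snoc_ls h1)
    simpa [Nat.add_assoc, Nat.add_comm, Nat.add_left_comm] using this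

lemma quad_key {T : Type} {pure : T → Prop} {dB ls : T → T → Prop} {c : ℕ}
    (hlb : ∀ t u d l, pure t → Deriv dB ls t u d l →
      ∀ v k, RelPow ls k u v → k ≤ c * d) :
    ∀ {m u : T} {d2 l2 : ℕ}, Deriv dB ls m u d2 l2 →
      ∀ t m' (d1 l1 j : ℕ), pure t → Deriv dB ls t m' d1 l1 → RelPow ls j m' m →
        l2 + j ≤ c * d1 + c * d2 * (d1 + d2) := by
  intro m u d2 l2 hder
  induction hder with
  | refl a =>
    intro t m' d1 l1 j hp hpre hj
    have := hlb t m' d1 l1 hp hpre a j hj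
    nlinarith
  | @ls a b u d2 l2 h1 h2 ih =>
    intro t m' d1 l1 j hp hpre hj
    have := ih t m' d1 l1 (j + 1) hp hpre (hj.snoc h1)
    omega
  | @db a b u d2 l2 h1 h2 ih =>
    intro t m' d1 l1 j hp hpre hj
    have hjb : j ≤ c * d1 := hlb t m' d1 l1 hp hpre a j hj
    have hpre' : Deriv dB ls t b (d1 + 1) (l1 + j) :=
      (hpre.append_relpow hj).snoc_db h1
    have := ih t b (d1 + 1) (l1 + j) 0 hp hpre' (RelPow.zero b)
    nlinarith

/-- Quadratic overhead: in a locally bounded high-level implementation system, every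
⤳_X-derivation ρ from a λ-term has length at most quadratic in the number of its
dB-steps, which is the length of its unfolding ρ↓: |ρ| = d + l ≤ d + c·d². -/
theorem quadratic_bound {T : Type} (pure : T → Prop) (unf : T → T)
    (lead dB ls : T → T → Prop)
    (hdet : ∀ a b c, lead a b → lead a c → b = c)
    (hpure : ∀ a, pure a → unf a = a)
    (hnf : ∀ a, (∀ b, ¬ dB a b) → (∀ b, ¬ ls a b) → ∀ c, ¬ lead (unf a) c)
    (hls : ∀ a b, ls a b → unf a = unf b)
    (hdb : ∀ a b, dB a b → lead (unf a) (unf b))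
    (c : ℕ)
    (hlb : ∀ t u d l, pure t → Deriv dB ls t u d l →
      ∀ v k, RelPow ls k u v → k ≤ c * d) :
    ∀ t u d l, pure t → Deriv dB ls t u d l → d + l ≤ d + c * d ^ 2 := by
  intro t u d l hp hder
  have := quad_key hlb hder t t 0 0 0 hp (Deriv.refl t) (RelPow.zero t)
  nlinarith [sq_nonneg d]
end

section
/- If a derivation ρ : t ⤳_X* u has the subterm property (all terms duplicated along ρ are subterms of t), then |u| ≤ (|ρ| + 1) · |t|, i.e., the size of the final term is bilinear in the length of the derivation and the size of the initial term. -/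
/-- Terms of the linear substitution calculus: variables, abstractions, applications,
and explicit substitutions `t[x←u]` (`sub t x u`). -/
inductive LTerm : Type
  | var : ℕ → LTerm
  | lam : ℕ → LTerm → LTerm
  | app : LTerm → LTerm → LTerm
  | sub : LTerm → ℕ → LTerm → LTerm
  deriving DecidableEq

namespace LTerm

/-- Meta-level substitution `t{x←u}` (assuming Barendregt's convention). -/
def subst (x : ℕ) (u : LTerm) : LTerm → LTerm
  | var y => if y = x then u else var y
  | lam y t => if y = x then lam y t else lam y (subst x u t)
  | app t r => app (subst x u t) (subst x u r)
  | sub t y r => if y = x then sub t y (subst x u r)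
                 else sub (subst x u t) y (subst x u r)

/-- Free variables. -/
def fv : LTerm → Finset ℕ
  | var x => {x}
  | lam x t => fv t \ {x}
  | app t u => fv t ∪ fv u
  | sub t x u => (fv t \ {x}) ∪ fv u

/-- Pure λ-terms: no explicit substitutions. -/
def IsPure : LTerm → Prop
  | var _ => True
  | lam _ t => IsPure t
  | app t u => IsPure t ∧ IsPure u
  | sub _ _ _ => False

/-- Unfolding: execute all explicit substitutions at the meta-level. -/
def unf : LTerm → LTerm
  | var x => var x
  | lam x t => lam x (unf t)
  | app t u => app (unf t) (unf u)
  | sub t x u => subst x (unf u) (unf t)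

/-- Size of a term, counting all constructors. -/
def size : LTerm → ℕ
  | var _ => 1
  | lam _ t => 1 + size t
  | app t u => 1 + size t + size u
  | sub t _ u => 1 + size t + size u

end LTerm

/-- Shallow one-hole contexts (the hole does not occur inside the content of an
explicit substitution). -/
inductive SCtx : Type
  | hole : SCtx
  | lam : ℕ → SCtx → SCtx
  | appL : SCtx → LTerm → SCtx
  | appR : LTerm → SCtx → SCtx
  | sub : SCtx → ℕ → LTerm → SCtx

namespace SCtx

/-- Plugging a term into a context (possibly capturing variables). -/
def plug : SCtx → LTerm → LTerm
  | hole, t => t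
  | lam x C, t => .lam x (plug C t)
  | appL C u, t => .app (plug C t) u
  | appR u C, t => .app u (plug C t)
  | sub C x u, t => .sub (plug C t) x u

/-- Plugging a context into a context. -/
def comp : SCtx → SCtx → SCtx
  | hole, D => D
  | lam x C, D => lam x (comp C D)
  | appL C u, D => appL (comp C D) u
  | appR u C, D => appR u (comp C D)
  | sub C x u, D => sub (comp C D) x u

/-- The variable `x` is captured by `C` (bound on the path to the hole). -/
def captures : SCtx → ℕ → Prop
  | hole, _ => False
  | lam y C, x => y = x ∨ captures C x
  | appL C _, x => captures C x
  | appR _ C, x => captures C x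
  | sub C y _, x => y = x ∨ captures C x

/-- Substitution on contexts, leaving the hole unchanged. -/
def substCtx (x : ℕ) (u : LTerm) : SCtx → SCtx
  | hole => hole
  | lam y C => if y = x then lam y C else lam y (substCtx x u C)
  | appL C t => appL (substCtx x u C) (LTerm.subst x u t)
  | appR t C => appR (LTerm.subst x u t) (substCtx x u C)
  | sub C y t => if y = x then sub C y (LTerm.subst x u t)
                 else sub (substCtx x u C) y (LTerm.subst x u t)

/-- Context unfolding. -/
def unfCtx : SCtx → SCtx
  | hole => hole
  | lam x C => lam x (unfCtx C)
  | appL C t => appL (unfCtx C) (LTerm.unf t)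
  | appR t C => appR (LTerm.unf t) (unfCtx C)
  | sub C x t => substCtx x (LTerm.unf t) (unfCtx C)

/-- Substitution contexts L ::= ⟨·⟩ | L[x←t]. -/
inductive IsSubCtx : SCtx → Prop
  | hole : IsSubCtx hole
  | sub {L : SCtx} (x : ℕ) (t : LTerm) : IsSubCtx L → IsSubCtx (sub L x t)

/-- Applicative contexts: the hole, possibly surrounded by explicit substitutions,
is in function position of an application, i.e. C = D⟨L u⟩. -/
def IsApplicative (C : SCtx) : Prop :=
  ∃ (D L : SCtx) (u : LTerm), IsSubCtx L ∧ C = comp D (appL L u)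

end SCtx

/-- Root dB-rule (β at a distance): L⟨λx.t⟩ u → L⟨t[x←u]⟩. -/
def RootDB (a b : LTerm) : Prop :=
  ∃ (L : SCtx) (x : ℕ) (t u : LTerm), SCtx.IsSubCtx L ∧
    a = .app (SCtx.plug L (.lam x t)) u ∧ b = SCtx.plug L (.sub t x u)

/-- Shallow dB-steps: closure of the root dB-rule under shallow contexts. -/
def DBStep (a b : LTerm) : Prop :=
  ∃ (C : SCtx) (t u : LTerm), RootDB t u ∧ a = SCtx.plug C t ∧ b = SCtx.plug C u

/-- Root ls-rule: C⟨x⟩[x←u] → C⟨u⟩[x←u] (with Barendregt's convention: C does not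
capture x nor the free variables of u, and x does not occur in u). -/
def RootLS (a b : LTerm) : Prop :=
  ∃ (C : SCtx) (x : ℕ) (u : LTerm),
    ¬ SCtx.captures C x ∧ x ∉ LTerm.fv u ∧ (∀ y ∈ LTerm.fv u, ¬ SCtx.captures C y) ∧
    a = .sub (SCtx.plug C (.var x)) x u ∧ b = .sub (SCtx.plug C u) x u

/-- Shallow ls-steps: closure of the root ls-rule under shallow contexts. -/
def LSStep (a b : LTerm) : Prop :=
  ∃ (C : SCtx) (t u : LTerm), RootLS t u ∧ a = SCtx.plug C t ∧ b = SCtx.plug C u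

/-- β-steps on (unfolded) terms. -/
def BetaStep (a b : LTerm) : Prop :=
  ∃ (C : SCtx) (x : ℕ) (t u : LTerm),
    a = SCtx.plug C (.app (.lam x t) u) ∧ b = SCtx.plug C (LTerm.subst x u t)

/-- Subterm relation. -/
inductive SubtermOf : LTerm → LTerm → Prop
  | refl (t : LTerm) : SubtermOf t t
  | lam {s t : LTerm} (x : ℕ) : SubtermOf s t → SubtermOf s (.lam x t)
  | appL {s t : LTerm} (u : LTerm) : SubtermOf s t → SubtermOf s (.app t u)
  | appR {s u : LTerm} (t : LTerm) : SubtermOf s u → SubtermOf s (.app t u)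
  | subL {s t : LTerm} (x : ℕ) (u : LTerm) : SubtermOf s t → SubtermOf s (.sub t x u)
  | subR {s u : LTerm} (t : LTerm) (x : ℕ) : SubtermOf s u → SubtermOf s (.sub t x u)

/-- An ls-step from `a` to `b` duplicating the term `r`:
F⟨C⟨x⟩[x←r]⟩ → F⟨C⟨r⟩[x←r]⟩. -/
def LSdup (r a b : LTerm) : Prop :=
  ∃ (F C : SCtx) (x : ℕ),
    a = SCtx.plug F (.sub (SCtx.plug C (.var x)) x r) ∧
    b = SCtx.plug F (.sub (SCtx.plug C r) x r)

/-- A derivation with the subterm property: every ls-step duplicates a subterm of `t0`. -/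
inductive DerivSub (t0 : LTerm) : LTerm → LTerm → ℕ → ℕ → Prop
  | refl (a : LTerm) : DerivSub t0 a a 0 0
  | db {a b c : LTerm} {d l : ℕ} :
      DBStep a b → DerivSub t0 b c d l → DerivSub t0 a c (d + 1) l
  | ls {a b c : LTerm} {d l : ℕ} {r : LTerm} :
      LSdup r a b → SubtermOf r t0 → DerivSub t0 b c d l → DerivSub t0 a c d (l + 1)

/-- Size of a shallow context. -/
def SCtx.csize : SCtx → ℕ
  | .hole => 0
  | .lam _ C => 1 + C.csize
  | .appL C u => 1 + C.csize + u.size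
  | .appR u C => 1 + u.size + C.csize
  | .sub C _ u => 1 + C.csize + u.size

lemma size_plug (C : SCtx) (s : LTerm) :
    (SCtx.plug C s).size = C.csize + s.size := by
  induction C with
  | hole => simp [SCtx.plug, SCtx.csize]
  | lam x C ih => simp [SCtx.plug, SCtx.csize, LTerm.size, ih]; omega
  | appL C u ih => simp [SCtx.plug, SCtx.csize, LTerm.size, ih]; omega
  | appR u C ih => simp [SCtx.plug, SCtx.csize, LTerm.size, ih]; omega
  | sub C x u ih => simp [SCtx.plug, SCtx.csize, LTerm.size, ih]; omega

lemma db_size {a b : LTerm} (h : DBStep a b) : b.size ≤ a.size := by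
  obtain ⟨C, t, u, ⟨L, x, t', u', _, rfl, rfl⟩, rfl, rfl⟩ := h
  simp [size_plug, LTerm.size]; omega

lemma ls_size {r a b : LTerm} (h : LSdup r a b) : b.size ≤ a.size + r.size := by
  obtain ⟨F, C, x, rfl, rfl⟩ := h
  simp [size_plug, LTerm.size]; omega

lemma subterm_size {s t : LTerm} (h : SubtermOf s t) : s.size ≤ t.size := by
  induction h with
  | refl => exact le_refl _
  | lam x _ ih => simp [LTerm.size]; omega
  | appL u _ ih => simp [LTerm.size]; omega
  | appR t _ ih => simp [LTerm.size]; omega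
  | subL x u _ ih => simp [LTerm.size]; omega
  | subR t x _ ih => simp [LTerm.size]; omega

lemma deriv_size {t0 a c : LTerm} {d l : ℕ} (h : DerivSub t0 a c d l) :
    c.size ≤ a.size + l * t0.size := by
  induction h with
  | refl => simp
  | db hdb _ ih => have := db_size hdb; omega
  | @ls a b c d l r hls hsub _ ih =>
      have h1 := ls_size hls
      have h2 := subterm_size hsub
      calc c.size ≤ b.size + l * t0.size := ih
        _ ≤ (a.size + t0.size) + l * t0.size := by omega
        _ = a.size + (l + 1) * t0.size := by ring

/-- Subterm property ⇒ no size-explosion: if ρ : t →* u has the subterm property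
then |u| ≤ (|ρ| + 1)·|t|, where |ρ| = d + l is the length of ρ. -/
theorem subterm_no_size_explosion (t u : LTerm) (d l : ℕ)
    (hρ : DerivSub t t u d l) :
    u.size ≤ (d + l + 1) * t.size := by
  calc u.size ≤ t.size + l * t.size := deriv_size hρ
    _ = (l + 1) * t.size := by ring
    _ ≤ (d + l + 1) * t.size := Nat.mul_le_mul_right _ (by omega)
end

section
/- Linear substitution steps preserve the unfolding: if t →_ls u in the shallow linear substitution calculus, then t↓ = u↓. -/
lemma fv_subst_subset (x : ℕ) (v : LTerm) (t : LTerm) :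
    LTerm.fv (LTerm.subst x v t) ⊆ (LTerm.fv t \ {x}) ∪ LTerm.fv v := by
  induction t with
  | var y =>
    intro z hz
    by_cases h : y = x <;> simp_all [LTerm.subst, LTerm.fv]
  | lam y t ih =>
    intro z hz
    by_cases h : y = x <;>
      simp only [LTerm.subst, LTerm.fv, if_pos, if_neg, h, ite_true, ite_false,
        Finset.mem_union, Finset.mem_sdiff, Finset.mem_singleton] at hz ⊢
    · tauto
    · obtain ⟨hz, hzy⟩ := hz
      have := ih hz
      simp only [Finset.mem_union, Finset.mem_sdiff, Finset.mem_singleton] at this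
      tauto
  | app t r iht ihr =>
    intro z hz
    simp only [LTerm.subst, LTerm.fv, Finset.mem_union, Finset.mem_sdiff,
      Finset.mem_singleton] at hz ⊢
    rcases hz with hz | hz
    · have := iht hz
      simp only [Finset.mem_union, Finset.mem_sdiff, Finset.mem_singleton] at this
      tauto
    · have := ihr hz
      simp only [Finset.mem_union, Finset.mem_sdiff, Finset.mem_singleton] at this
      tauto
  | sub t y r iht ihr =>
    intro z hz
    by_cases h : y = x <;>
      simp only [LTerm.subst, LTerm.fv, if_pos, if_neg, h, ite_true, ite_false,
        Finset.mem_union, Finset.mem_sdiff, Finset.mem_singleton] at hz ⊢ <;>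
      rcases hz with ⟨hz, hzy⟩ | hz
    · tauto
    · have := ihr hz
      simp only [Finset.mem_union, Finset.mem_sdiff, Finset.mem_singleton] at this
      tauto
    · have := iht hz
      simp only [Finset.mem_union, Finset.mem_sdiff, Finset.mem_singleton] at this
      tauto
    · have := ihr hz
      simp only [Finset.mem_union, Finset.mem_sdiff, Finset.mem_singleton] at this
      tauto

lemma subst_not_free (x : ℕ) (v : LTerm) (t : LTerm) (h : x ∉ LTerm.fv t) :
    LTerm.subst x v t = t := by
  induction t with
  | var y =>
    simp [LTerm.fv] at h
    simp [LTerm.subst, Ne.symm h]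
  | lam y t ih =>
    by_cases hy : y = x
    · simp [LTerm.subst, hy]
    · simp only [LTerm.fv, Finset.mem_sdiff, Finset.mem_singleton, not_and, not_not] at h
      have hx : x ∉ LTerm.fv t := by
        intro hx
        exact hy (h hx).symm
      simp [LTerm.subst, hy, ih hx]
  | app t r iht ihr =>
    simp [LTerm.fv] at h
    simp [LTerm.subst, iht h.1, ihr h.2]
  | sub t y r iht ihr =>
    simp only [LTerm.fv, Finset.mem_union, Finset.mem_sdiff, Finset.mem_singleton,
      not_or, not_and, not_not] at h
    by_cases hy : y = x
    · simp [LTerm.subst, hy, ihr h.2]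
    · have hx : x ∉ LTerm.fv t := by
        intro hx
        exact hy (h.1 hx).symm
      simp [LTerm.subst, hy, iht hx, ihr h.2]

lemma fv_unf_subset (t : LTerm) : LTerm.fv (LTerm.unf t) ⊆ LTerm.fv t := by
  induction t with
  | var x => simp [LTerm.unf]
  | lam x t ih =>
    simp [LTerm.unf, LTerm.fv]
    exact ih.trans (Finset.subset_insert _ _)
  | app t r iht ihr =>
    simp [LTerm.unf, LTerm.fv]
    exact Finset.union_subset_union iht ihr
  | sub t x r iht ihr =>
    simp only [LTerm.unf, LTerm.fv]
    intro z hz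
    have := fv_subst_subset x (LTerm.unf r) (LTerm.unf t) hz
    simp at this ⊢
    rcases this with ⟨h1, h2⟩ | h1
    · exact Or.inl ⟨iht h1, h2⟩
    · exact Or.inr (ihr h1)

lemma captures_substCtx (x : ℕ) (v : LTerm) (C : SCtx) (y : ℕ) :
    SCtx.captures (SCtx.substCtx x v C) y ↔ SCtx.captures C y := by
  induction C with
  | hole => simp [SCtx.substCtx]
  | lam z C ih =>
    by_cases hz : z = x <;> simp [SCtx.substCtx, hz, SCtx.captures, ih]
  | appL C t ih => simp [SCtx.substCtx, SCtx.captures, ih]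
  | appR t C ih => simp [SCtx.substCtx, SCtx.captures, ih]
  | sub C z t ih =>
    by_cases hz : z = x <;> simp [SCtx.substCtx, hz, SCtx.captures, ih]

lemma captures_unfCtx (C : SCtx) (y : ℕ) (h : SCtx.captures (SCtx.unfCtx C) y) :
    SCtx.captures C y := by
  induction C with
  | hole => simpa [SCtx.unfCtx] using h
  | lam z C ih =>
    simp [SCtx.unfCtx, SCtx.captures] at h ⊢; tauto
  | appL C t ih => simp [SCtx.unfCtx, SCtx.captures] at h ⊢; tauto
  | appR t C ih => simp [SCtx.unfCtx, SCtx.captures] at h ⊢; tauto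
  | sub C z t ih =>
    simp only [SCtx.unfCtx] at h
    rw [captures_substCtx] at h
    simp [SCtx.captures]; tauto

lemma subst_plug (x : ℕ) (w : LTerm) (D : SCtx) (s : LTerm)
    (h : ¬ SCtx.captures D x) :
    LTerm.subst x w (SCtx.plug D s) = SCtx.plug (SCtx.substCtx x w D) (LTerm.subst x w s) := by
  induction D with
  | hole => simp [SCtx.plug, SCtx.substCtx]
  | lam z C ih =>
    simp [SCtx.captures] at h
    simp [SCtx.plug, SCtx.substCtx, LTerm.subst, h.1, ih h.2]
  | appL C t ih =>
    simp [SCtx.captures] at h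
    simp [SCtx.plug, SCtx.substCtx, LTerm.subst, ih h]
  | appR t C ih =>
    simp [SCtx.captures] at h
    simp [SCtx.plug, SCtx.substCtx, LTerm.subst, ih h]
  | sub C z t ih =>
    simp [SCtx.captures] at h
    simp [SCtx.plug, SCtx.substCtx, LTerm.subst, h.1, ih h.2]

lemma subst_plug_fixed (x : ℕ) (w : LTerm) (D : SCtx) (s : LTerm)
    (h : LTerm.subst x w s = s) :
    LTerm.subst x w (SCtx.plug D s) = SCtx.plug (SCtx.substCtx x w D) s := by
  induction D with
  | hole => simpa [SCtx.plug, SCtx.substCtx]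
  | lam z C ih =>
    by_cases hz : z = x <;> simp [SCtx.plug, SCtx.substCtx, LTerm.subst, hz, ih]
  | appL C t ih => simp [SCtx.plug, SCtx.substCtx, LTerm.subst, ih]
  | appR t C ih => simp [SCtx.plug, SCtx.substCtx, LTerm.subst, ih]
  | sub C z t ih =>
    by_cases hz : z = x <;> simp [SCtx.plug, SCtx.substCtx, LTerm.subst, hz, ih]

lemma unf_plug (C : SCtx) (s : LTerm)
    (h : ∀ y, SCtx.captures C y → y ∉ LTerm.fv (LTerm.unf s)) :
    LTerm.unf (SCtx.plug C s) = SCtx.plug (SCtx.unfCtx C) (LTerm.unf s) := by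
  induction C with
  | hole => simp [SCtx.plug, SCtx.unfCtx]
  | lam z C ih =>
    have h' : ∀ y, SCtx.captures C y → y ∉ LTerm.fv (LTerm.unf s) := by
      intro y hy; exact h y (Or.inr hy)
    simp [SCtx.plug, SCtx.unfCtx, LTerm.unf, ih h']
  | appL C t ih =>
    have h' : ∀ y, SCtx.captures C y → y ∉ LTerm.fv (LTerm.unf s) := fun y hy => h y hy
    simp [SCtx.plug, SCtx.unfCtx, LTerm.unf, ih h']
  | appR t C ih =>
    have h' : ∀ y, SCtx.captures C y → y ∉ LTerm.fv (LTerm.unf s) := fun y hy => h y hy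
    simp [SCtx.plug, SCtx.unfCtx, LTerm.unf, ih h']
  | sub C z t ih =>
    have h' : ∀ y, SCtx.captures C y → y ∉ LTerm.fv (LTerm.unf s) := by
      intro y hy; exact h y (Or.inr hy)
    have hz : z ∉ LTerm.fv (LTerm.unf s) := h z (Or.inl rfl)
    have hfix : LTerm.subst z (LTerm.unf t) (LTerm.unf s) = LTerm.unf s :=
      subst_not_free _ _ _ hz
    simp only [SCtx.plug, SCtx.unfCtx, LTerm.unf, ih h']
    exact subst_plug_fixed z (LTerm.unf t) (SCtx.unfCtx C) (LTerm.unf s) hfix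

lemma unf_plug_congr (C : SCtx) (s s' : LTerm) (h : LTerm.unf s = LTerm.unf s') :
    LTerm.unf (SCtx.plug C s) = LTerm.unf (SCtx.plug C s') := by
  induction C with
  | hole => simpa [SCtx.plug]
  | lam z C ih => simp [SCtx.plug, LTerm.unf, ih]
  | appL C t ih => simp [SCtx.plug, LTerm.unf, ih]
  | appR t C ih => simp [SCtx.plug, LTerm.unf, ih]
  | sub C z t ih => simp [SCtx.plug, LTerm.unf, ih]

/-- ls-steps project on equality: linear substitution steps preserve the unfolding. -/
theorem ls_preserves_unfolding (t u : LTerm) (h : LSStep t u) :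
    LTerm.unf t = LTerm.unf u := by
  obtain ⟨F, a, b, ⟨C, x, r, hcap, hxr, hfvr, ha, hb⟩, ht, hu⟩ := h
  subst ht hu ha hb
  apply unf_plug_congr
  have hxu : x ∉ LTerm.fv (LTerm.unf r) := fun hx => hxr (fv_unf_subset r hx)
  have h1 : LTerm.unf (SCtx.plug C (LTerm.var x))
      = SCtx.plug (SCtx.unfCtx C) (LTerm.var x) := by
    have := unf_plug C (LTerm.var x) (by
      intro y hy
      simp [LTerm.unf, LTerm.fv]
      rintro rfl
      exact hcap hy)
    simpa [LTerm.unf] using this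
  have h2 : LTerm.unf (SCtx.plug C r) = SCtx.plug (SCtx.unfCtx C) (LTerm.unf r) := by
    apply unf_plug
    intro y hy hyfv
    exact hfvr y (fv_unf_subset r hyfv) hy
  have hcapU : ¬ SCtx.captures (SCtx.unfCtx C) x := fun hc => hcap (captures_unfCtx C x hc)
  simp only [LTerm.unf, h1, h2]
  rw [subst_plug x (LTerm.unf r) (SCtx.unfCtx C) (LTerm.var x) hcapU,
      subst_plug_fixed x (LTerm.unf r) (SCtx.unfCtx C) (LTerm.unf r)
        (subst_not_free _ _ _ hxu)]
  simp [LTerm.subst]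
end
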